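/- Suppose C₁, C₂ ∈ M_s(ℂ) are invertible, b = (b₁,b₂) ∈ ℂ² is such that B₀ := ℒ(b₁,b₂) ∈ M_{4s}(ℂ) is positive definite, 𝔏 = (ℓ_{j,k}) ∈ M₂(ℂ) is invertible, Y_j = ℓ_{1,j}R₁ + ℓ_{2,j}R₂ for j = 1,2, and P, Q ∈ M_{4s}(ℂ) satisfy PP* = B₀ = QQ* and Y_j = P · diag(E_j, 0_{s×s}) · Q* for j = 1, 2 (diag(E_j, 0) being the 4s×4s block-diagonal matrix with E_j in the upper-left 3s×3s corner). Write P = (P_{i,k}) and Q = (Q_{i,k}) as 4×4 block matrices with s×s blocks. Then: Q_{1,4} and P_{4,4} are unitary; Q_{4,3} and P_{1,1} are invertible; and, with T = (Q_{4,3}*)^{−1} and S' = (P_{1,1}*)^{−1}: P_{1,4} = 0; P_{2,1} = P_{3,1} = P_{4,1} = P_{4,2} = P_{4,3} = 0; P_{2,2} = ℓ_{2,2}C₂TC₂^{−1}; P_{2,3} = ℓ_{2,1}C₂TC₁^{−1}; P_{2,4} = b₂C₂P_{4,4}; P_{3,2} = ℓ_{1,2}C₁TC₂^{−1}; P_{3,3}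 = ℓ_{1,1}C₁TC₁^{−1}; P_{3,4} = b₁C₁P_{4,4}; and Q_{1,1} = Q_{1,2} = Q_{1,3} = 0; Q_{2,3} = Q_{3,3} = Q_{4,4} = 0; Q_{2,1} = conj(ℓ_{1,1})·C₁*S'(C₁*)^{−1}; Q_{2,2} = conj(ℓ_{1,2})·C₁*S'(C₂*)^{−1}; Q_{2,4} = conj(b₁)·C₁*Q_{1,4}; Q_{3,1} = conj(ℓ_{2,1})·C₂*S'(C₁*)^{−1}; Q_{3,2} = conj(ℓ_{2,2})·C₂*S'(C₂*)^{−1}; Q_{3,4} = conj(b₂)·C₂*Q_{1,4}. -/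

import Mathlib

open scoped ComplexOrder Kronecker Matrix Matrix.Norms.L2Operator

noncomputable section

/-- Square complex matrices of size `n`. -/
abbrev Mat (n : ℕ) : Type := Matrix (Fin n) (Fin n) ℂ

/-- Assemble a `k × k` array of matrices into a single block matrix. -/
def blockMat {k : ℕ} {α β : Type*} (M : Fin k → Fin k → Matrix α β ℂ) :
    Matrix (Fin k × α) (Fin k × β) ℂ :=
  Matrix.of fun p q => M p.1 q.1 p.2 q.2

/-- The matrix `R₁`. -/
def Rmat1 {s : ℕ} (C1 : Matrix (Fin s) (Fin s) ℂ) :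
    Matrix (Fin 4 × Fin s) (Fin 4 × Fin s) ℂ :=
  blockMat ![![0, C1, 0, 0], ![0, 0, 0, 0], ![0, 0, 0, C1], ![0, 0, 0, 0]]

/-- The matrix `R₂`. -/
def Rmat2 {s : ℕ} (C2 : Matrix (Fin s) (Fin s) ℂ) :
    Matrix (Fin 4 × Fin s) (Fin 4 × Fin s) ℂ :=
  blockMat ![![0, 0, C2, 0], ![0, 0, 0, C2], ![0, 0, 0, 0], ![0, 0, 0, 0]]

/-- `ℒ(z₁, z₂)` at level one, as a `4s × 4s` matrix. -/
def scrL1 {s : ℕ} (C1 C2 : Matrix (Fin s) (Fin s) ℂ) (z1 z2 : ℂ) :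
    Matrix (Fin 4 × Fin s) (Fin 4 × Fin s) ℂ :=
  blockMat ![![1, z1 • C1, z2 • C2, 0],
             ![(z1 • C1)ᴴ, 1, 0, z2 • C2],
             ![(z2 • C2)ᴴ, 0, 1, z1 • C1],
             ![0, (z2 • C2)ᴴ, (z1 • C1)ᴴ, 1]]

/-- The `(i, k)` block of a `4 × 4` block matrix with `s × s` blocks. -/
def blk {s : ℕ} (M : Matrix (Fin 4 × Fin s) (Fin 4 × Fin s) ℂ) (i k : Fin 4) :
    Matrix (Fin s) (Fin s) ℂ :=
  Matrix.of fun a b => M (i, a) (k, b)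


section Helpers

lemma blk_blockMat {s : ℕ} (M : Fin 4 → Fin 4 → Matrix (Fin s) (Fin s) ℂ) (i k : Fin 4) :
    blk (blockMat M) i k = M i k := rfl

lemma blk_mul {s : ℕ} (A B : Matrix (Fin 4 × Fin s) (Fin 4 × Fin s) ℂ) (i k : Fin 4) :
    blk (A * B) i k = ∑ j : Fin 4, blk A i j * blk B j k := by
  ext a b
  simp only [blk, Matrix.mul_apply, Fintype.sum_prod_type, Matrix.sum_apply, Matrix.of_apply]

lemma blk_conjT {s : ℕ} (A : Matrix (Fin 4 × Fin s) (Fin 4 × Fin s) ℂ) (i k : Fin 4) :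
    blk Aᴴ i k = (blk A k i)ᴴ := by
  ext a b; simp [blk, Matrix.conjTranspose_apply]

lemma blk_add {s : ℕ} (A B : Matrix (Fin 4 × Fin s) (Fin 4 × Fin s) ℂ) (i k : Fin 4) :
    blk (A + B) i k = blk A i k + blk B i k := rfl

lemma blk_smul {s : ℕ} (c : ℂ) (A : Matrix (Fin 4 × Fin s) (Fin 4 × Fin s) ℂ) (i k : Fin 4) :
    blk (c • A) i k = c • blk A i k := rfl

lemma blk_zero {s : ℕ} (i k : Fin 4) :
    blk (0 : Matrix (Fin 4 × Fin s) (Fin 4 × Fin s) ℂ) i k = 0 := rfl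

lemma blk_ext {s : ℕ} {A B : Matrix (Fin 4 × Fin s) (Fin 4 × Fin s) ℂ}
    (h : ∀ i k, blk A i k = blk B i k) : A = B := by
  ext ⟨i,a⟩ ⟨k,b⟩
  exact congrFun (congrFun (h i k) a) b

lemma unit_mul_eq_zero {n : Type*} [Fintype n] [DecidableEq n] {A X : Matrix n n ℂ}
    (hA : IsUnit A.det) (h : A * X = 0) : X = 0 := by
  calc X = A⁻¹ * A * X := by rw [Matrix.nonsing_inv_mul _ hA, one_mul]
  _ = A⁻¹ * (A * X) := by rw [mul_assoc]
  _ = 0 := by rw [h, mul_zero]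

lemma mul_unit_eq_zero {n : Type*} [Fintype n] [DecidableEq n] {A X : Matrix n n ℂ}
    (hA : IsUnit A.det) (h : X * A = 0) : X = 0 := by
  calc X = X * A * A⁻¹ := by rw [Matrix.mul_nonsing_inv_cancel_right _ _ hA]
  _ = 0 := by rw [h, zero_mul]

lemma solve_rr {n : Type*} [Fintype n] [DecidableEq n] {A B X S : Matrix n n ℂ}
    (hA : IsUnit A.det) (hB : IsUnit B.det) (h : X * A * B = S) : X = S * B⁻¹ * A⁻¹ := by
  rw [← h, Matrix.mul_nonsing_inv_cancel_right _ _ hB, Matrix.mul_nonsing_inv_cancel_right _ _ hA]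

lemma pair_cancel {s : ℕ} {a b μ ν : ℂ} {C D X : Mat s}
    (hone : a * μ + b * ν = 1) (hC : IsUnit C.det) (hD : IsUnit D.det)
    (h1 : μ • (C * X) = 0) (h2 : ν • (D * X) = 0) : X = 0 := by
  rcases eq_or_ne μ 0 with hμ | hμ
  · have hν : ν ≠ 0 := by rintro rfl; simp [hμ] at hone
    exact unit_mul_eq_zero hD ((smul_eq_zero.mp h2).resolve_left hν)
  · exact unit_mul_eq_zero hC ((smul_eq_zero.mp h1).resolve_left hμ)

lemma pair_cancel' {s : ℕ} {a b μ ν : ℂ} {C D X : Mat s}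
    (hone : a * μ + b * ν = 1) (hC : IsUnit C.det) (hD : IsUnit D.det)
    (h1 : μ • (X * C) = 0) (h2 : ν • (X * D) = 0) : X = 0 := by
  rcases eq_or_ne μ 0 with hμ | hμ
  · have hν : ν ≠ 0 := by rintro rfl; simp [hμ] at hone
    exact mul_unit_eq_zero hD ((smul_eq_zero.mp h2).resolve_left hν)
  · exact mul_unit_eq_zero hC ((smul_eq_zero.mp h1).resolve_left hμ)

lemma blk_col_isUnit {s : ℕ} {A : Matrix (Fin 4 × Fin s) (Fin 4 × Fin s) ℂ}
    (hA : IsUnit A.det) {i0 j0 : Fin 4} (h : ∀ i, i ≠ i0 → blk A i j0 = 0) :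
    IsUnit (blk A i0 j0) := by
  rw [Matrix.isUnit_iff_isUnit_det, isUnit_iff_ne_zero]
  intro hdet
  obtain ⟨v, hv, hv0⟩ := Matrix.exists_mulVec_eq_zero_iff.mpr hdet
  obtain ⟨a, ha⟩ := Function.ne_iff.mp hv
  have hw : A.mulVec (fun z => if z.1 = j0 then v z.2 else 0) = 0 := by
    funext z
    obtain ⟨i, c⟩ := z
    have key : ∀ i : Fin 4, A.mulVec (fun z => if z.1 = j0 then v z.2 else 0) (i, c)
        = (blk A i j0).mulVec v c := by
      intro i
      simp only [Matrix.mulVec, dotProduct, Fintype.sum_prod_type, blk, Matrix.of_apply,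
        mul_ite, mul_zero]
      rw [Finset.sum_comm]
      simp [Finset.sum_ite_eq']
    rcases eq_or_ne i i0 with rfl | hi
    · rw [key, hv0]; rfl
    · rw [key, h i hi]; simp [Matrix.mulVec]
  have : A.det = 0 := Matrix.exists_mulVec_eq_zero_iff.mp
    ⟨_, fun h0 => ha (by simpa using congrFun h0 (j0, a)), hw⟩
  rw [isUnit_iff_ne_zero] at hA
  exact hA this

/-- auxiliary block-diagonal matrices used as cutoffs -/
def bigD {s : ℕ} (d0 d1 d2 d3 : Mat s) : Matrix (Fin 4 × Fin s) (Fin 4 × Fin s) ℂ :=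
  blockMat ![![d0, 0, 0, 0], ![0, d1, 0, 0], ![0, 0, d2, 0], ![0, 0, 0, d3]]

end Helpers

set_option maxHeartbeats 2000000 in
/-- Lemma 3.3: the block structure of the matrices `P` and `Q`. -/
theorem blocks_of_P_and_Q {s : ℕ} (hs : 0 < s)
    (C1 C2 : Matrix (Fin s) (Fin s) ℂ) (hinv1 : IsUnit C1) (hinv2 : IsUnit C2)
    (b1 b2 : ℂ) (hB0 : (scrL1 C1 C2 b1 b2).PosDef)
    (ℓ : Matrix (Fin 2) (Fin 2) ℂ) (hℓ : IsUnit ℓ)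
    (P Q : Matrix (Fin 4 × Fin s) (Fin 4 × Fin s) ℂ)
    (hP : P * Pᴴ = scrL1 C1 C2 b1 b2) (hQ : Q * Qᴴ = scrL1 C1 C2 b1 b2)
    (hY1 : ℓ 0 0 • Rmat1 C1 + ℓ 1 0 • Rmat2 C2 =
      P * blockMat ![![C1, 0, 0, 0], ![0, 0, 0, 0], ![0, 0, C1, 0], ![0, 0, 0, 0]] * Qᴴ)
    (hY2 : ℓ 0 1 • Rmat1 C1 + ℓ 1 1 • Rmat2 C2 =
      P * blockMat ![![0, C2, 0, 0], ![0, 0, C2, 0], ![0, 0, 0, 0], ![0, 0, 0, 0]] * Qᴴ) :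
    blk Q 0 3 ∈ Matrix.unitaryGroup (Fin s) ℂ ∧
    blk P 3 3 ∈ Matrix.unitaryGroup (Fin s) ℂ ∧
    IsUnit (blk Q 3 2) ∧ IsUnit (blk P 0 0) ∧
    blk P 0 3 = 0 ∧ blk P 1 0 = 0 ∧ blk P 2 0 = 0 ∧
    blk P 3 0 = 0 ∧ blk P 3 1 = 0 ∧ blk P 3 2 = 0 ∧
    blk P 1 1 = ℓ 1 1 • (C2 * ((blk Q 3 2)ᴴ)⁻¹ * C2⁻¹) ∧
    blk P 1 2 = ℓ 1 0 • (C2 * ((blk Q 3 2)ᴴ)⁻¹ * C1⁻¹) ∧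
    blk P 1 3 = b2 • (C2 * blk P 3 3) ∧
    blk P 2 1 = ℓ 0 1 • (C1 * ((blk Q 3 2)ᴴ)⁻¹ * C2⁻¹) ∧
    blk P 2 2 = ℓ 0 0 • (C1 * ((blk Q 3 2)ᴴ)⁻¹ * C1⁻¹) ∧
    blk P 2 3 = b1 • (C1 * blk P 3 3) ∧
    blk Q 0 0 = 0 ∧ blk Q 0 1 = 0 ∧ blk Q 0 2 = 0 ∧
    blk Q 1 2 = 0 ∧ blk Q 2 2 = 0 ∧ blk Q 3 3 = 0 ∧
    blk Q 1 0 = (starRingEnd ℂ) (ℓ 0 0) • (C1ᴴ * ((blk P 0 0)ᴴ)⁻¹ * (C1ᴴ)⁻¹) ∧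
    blk Q 1 1 = (starRingEnd ℂ) (ℓ 0 1) • (C1ᴴ * ((blk P 0 0)ᴴ)⁻¹ * (C2ᴴ)⁻¹) ∧
    blk Q 1 3 = (starRingEnd ℂ) b1 • (C1ᴴ * blk Q 0 3) ∧
    blk Q 2 0 = (starRingEnd ℂ) (ℓ 1 0) • (C2ᴴ * ((blk P 0 0)ᴴ)⁻¹ * (C1ᴴ)⁻¹) ∧
    blk Q 2 1 = (starRingEnd ℂ) (ℓ 1 1) • (C2ᴴ * ((blk P 0 0)ᴴ)⁻¹ * (C2ᴴ)⁻¹) ∧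
    blk Q 2 3 = (starRingEnd ℂ) b2 • (C2ᴴ * blk Q 0 3) := by
  have hd1 : IsUnit C1.det := (Matrix.isUnit_iff_isUnit_det C1).mp hinv1
  have hd2 : IsUnit C2.det := (Matrix.isUnit_iff_isUnit_det C2).mp hinv2
  have hd1H : IsUnit (C1ᴴ).det := by rw [Matrix.det_conjTranspose]; exact hd1.star
  have hd2H : IsUnit (C2ᴴ).det := by rw [Matrix.det_conjTranspose]; exact hd2.star
  have hdetB : (scrL1 C1 C2 b1 b2).det ≠ 0 := ne_of_gt hB0.det_pos
  have hPdet : IsUnit P.det := by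
    rw [isUnit_iff_ne_zero]
    intro h0
    exact hdetB (by rw [← hP, Matrix.det_mul, h0, zero_mul])
  have hQdet : IsUnit Q.det := by
    rw [isUnit_iff_ne_zero]
    intro h0
    exact hdetB (by rw [← hQ, Matrix.det_mul, h0, zero_mul])
  have hQHdet : IsUnit Qᴴ.det := by rw [Matrix.det_conjTranspose]; exact hQdet.star
  -- Gram equations
  have EP : ∀ i k, ∑ j : Fin 4, blk P i j * (blk P k j)ᴴ = blk (scrL1 C1 C2 b1 b2) i k := by
    intro i k
    have h := congrArg (fun X => blk X i k) hP
    simpa only [blk_mul, blk_conjT] using h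
  have EQ : ∀ i k, ∑ j : Fin 4, blk Q i j * (blk Q k j)ᴴ = blk (scrL1 C1 C2 b1 b2) i k := by
    intro i k
    have h := congrArg (fun X => blk X i k) hQ
    simpa only [blk_mul, blk_conjT] using h
  -- bilinear equations
  have EY1 : ∀ i k, blk P i 0 * C1 * (blk Q k 0)ᴴ + blk P i 2 * C1 * (blk Q k 2)ᴴ
      = ℓ 0 0 • blk (Rmat1 C1) i k + ℓ 1 0 • blk (Rmat2 C2) i k := by
    intro i k
    have h := congrArg (fun X => blk X i k) hY1
    simp only [blk_add, blk_smul, blk_mul, blk_conjT, blk_blockMat, Fin.sum_univ_four,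
      Matrix.cons_val_zero, Matrix.cons_val_one, Matrix.head_cons, Matrix.cons_val_two,
      Matrix.tail_cons, Matrix.cons_val_three, mul_zero, zero_mul, add_zero, zero_add] at h
    exact h.symm
  have EY2 : ∀ i k, blk P i 0 * C2 * (blk Q k 1)ᴴ + blk P i 1 * C2 * (blk Q k 2)ᴴ
      = ℓ 0 1 • blk (Rmat1 C1) i k + ℓ 1 1 • blk (Rmat2 C2) i k := by
    intro i k
    have h := congrArg (fun X => blk X i k) hY2
    simp only [blk_add, blk_smul, blk_mul, blk_conjT, blk_blockMat, Fin.sum_univ_four,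
      Matrix.cons_val_zero, Matrix.cons_val_one, Matrix.head_cons, Matrix.cons_val_two,
      Matrix.tail_cons, Matrix.cons_val_three, mul_zero, zero_mul, add_zero, zero_add] at h
    exact h.symm
  -- Stage 1 : first block-row of Q vanishes (except last), last block-row of P vanishes
  have hMQ1 : blockMat ![![C1, 0, 0, 0], ![0, 0, 0, 0], ![0, 0, C1, 0], ![0, 0, 0, 0]]
      * (Qᴴ * bigD (1 : Mat s) 0 0 0) = 0 := by
    apply unit_mul_eq_zero hPdet
    have h1 : P * (blockMat ![![C1, 0, 0, 0], ![0, 0, 0, 0], ![0, 0, C1, 0], ![0, 0, 0, 0]]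
        * (Qᴴ * bigD (1 : Mat s) 0 0 0))
        = (ℓ 0 0 • Rmat1 C1 + ℓ 1 0 • Rmat2 C2) * bigD (1 : Mat s) 0 0 0 := by
      rw [hY1, mul_assoc, mul_assoc]
    rw [h1]
    apply blk_ext; intro i k
    fin_cases i <;> fin_cases k <;> simp [Rmat1, Rmat2, bigD, blk_mul, blk_add, blk_smul, blk_blockMat, blk_zero,
      Fin.sum_univ_four, Matrix.vecHead, Matrix.vecTail]
  have hMQ2 : blockMat ![![0, C2, 0, 0], ![0, 0, C2, 0], ![0, 0, 0, 0], ![0, 0, 0, 0]]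
      * (Qᴴ * bigD (1 : Mat s) 0 0 0) = 0 := by
    apply unit_mul_eq_zero hPdet
    have h1 : P * (blockMat ![![0, C2, 0, 0], ![0, 0, C2, 0], ![0, 0, 0, 0], ![0, 0, 0, 0]]
        * (Qᴴ * bigD (1 : Mat s) 0 0 0))
        = (ℓ 0 1 • Rmat1 C1 + ℓ 1 1 • Rmat2 C2) * bigD (1 : Mat s) 0 0 0 := by
      rw [hY2, mul_assoc, mul_assoc]
    rw [h1]
    apply blk_ext; intro i k
    fin_cases i <;> fin_cases k <;> simp [Rmat1, Rmat2, bigD, blk_mul, blk_add, blk_smul, blk_blockMat, blk_zero,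
      Fin.sum_univ_four, Matrix.vecHead, Matrix.vecTail]
  have q00 : blk Q 0 0 = 0 := by
    have h := congrArg (fun X => blk X 0 0) hMQ1
    simp only [blk_mul, blk_conjT, blk_blockMat, blk_zero, bigD, Fin.sum_univ_four,
      Matrix.cons_val_zero, Matrix.cons_val_one, Matrix.head_cons, Matrix.cons_val_two,
      Matrix.tail_cons, Matrix.cons_val_three, mul_zero, zero_mul, add_zero, zero_add,
      mul_one] at h
    rw [← Matrix.conjTranspose_eq_zero]
    exact unit_mul_eq_zero hd1 h
  have q02 : blk Q 0 2 = 0 := by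
    have h := congrArg (fun X => blk X 2 0) hMQ1
    simp only [blk_mul, blk_conjT, blk_blockMat, blk_zero, bigD, Fin.sum_univ_four,
      Matrix.cons_val_zero, Matrix.cons_val_one, Matrix.head_cons, Matrix.cons_val_two,
      Matrix.tail_cons, Matrix.cons_val_three, mul_zero, zero_mul, add_zero, zero_add,
      mul_one] at h
    rw [← Matrix.conjTranspose_eq_zero]
    exact unit_mul_eq_zero hd1 h
  have q01 : blk Q 0 1 = 0 := by
    have h := congrArg (fun X => blk X 0 0) hMQ2
    simp only [blk_mul, blk_conjT, blk_blockMat, blk_zero, bigD, Fin.sum_univ_four,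
      Matrix.cons_val_zero, Matrix.cons_val_one, Matrix.head_cons, Matrix.cons_val_two,
      Matrix.tail_cons, Matrix.cons_val_three, mul_zero, zero_mul, add_zero, zero_add,
      mul_one] at h
    rw [← Matrix.conjTranspose_eq_zero]
    exact unit_mul_eq_zero hd2 h
  have hPM1 : bigD (0 : Mat s) 0 0 1
      * (P * blockMat ![![C1, 0, 0, 0], ![0, 0, 0, 0], ![0, 0, C1, 0], ![0, 0, 0, 0]]) = 0 := by
    apply mul_unit_eq_zero hQHdet
    have h1 : bigD (0 : Mat s) 0 0 1
        * (P * blockMat ![![C1, 0, 0, 0], ![0, 0, 0, 0], ![0, 0, C1, 0], ![0, 0, 0, 0]]) * Qᴴ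
        = bigD (0 : Mat s) 0 0 1 * (ℓ 0 0 • Rmat1 C1 + ℓ 1 0 • Rmat2 C2) := by
      rw [hY1]; simp only [mul_assoc]
    rw [h1]
    apply blk_ext; intro i k
    fin_cases i <;> fin_cases k <;> simp [Rmat1, Rmat2, bigD, blk_mul, blk_add, blk_smul, blk_blockMat, blk_zero,
      Fin.sum_univ_four, Matrix.vecHead, Matrix.vecTail]
  have hPM2 : bigD (0 : Mat s) 0 0 1
      * (P * blockMat ![![0, C2, 0, 0], ![0, 0, C2, 0], ![0, 0, 0, 0], ![0, 0, 0, 0]]) = 0 := by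
    apply mul_unit_eq_zero hQHdet
    have h1 : bigD (0 : Mat s) 0 0 1
        * (P * blockMat ![![0, C2, 0, 0], ![0, 0, C2, 0], ![0, 0, 0, 0], ![0, 0, 0, 0]]) * Qᴴ
        = bigD (0 : Mat s) 0 0 1 * (ℓ 0 1 • Rmat1 C1 + ℓ 1 1 • Rmat2 C2) := by
      rw [hY2]; simp only [mul_assoc]
    rw [h1]
    apply blk_ext; intro i k
    fin_cases i <;> fin_cases k <;> simp [Rmat1, Rmat2, bigD, blk_mul, blk_add, blk_smul, blk_blockMat, blk_zero,
      Fin.sum_univ_four, Matrix.vecHead, Matrix.vecTail]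
  have p30 : blk P 3 0 = 0 := by
    have h := congrArg (fun X => blk X 3 0) hPM1
    simp only [blk_mul, blk_blockMat, blk_zero, bigD, Fin.sum_univ_four,
      Matrix.cons_val_zero, Matrix.cons_val_one, Matrix.head_cons, Matrix.cons_val_two,
      Matrix.tail_cons, Matrix.cons_val_three, mul_zero, zero_mul, add_zero, zero_add,
      one_mul] at h
    exact mul_unit_eq_zero hd1 h
  have p32 : blk P 3 2 = 0 := by
    have h := congrArg (fun X => blk X 3 2) hPM1
    simp only [blk_mul, blk_blockMat, blk_zero, bigD, Fin.sum_univ_four,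
      Matrix.cons_val_zero, Matrix.cons_val_one, Matrix.head_cons, Matrix.cons_val_two,
      Matrix.tail_cons, Matrix.cons_val_three, mul_zero, zero_mul, add_zero, zero_add,
      one_mul] at h
    exact mul_unit_eq_zero hd1 h
  have p31 : blk P 3 1 = 0 := by
    have h := congrArg (fun X => blk X 3 2) hPM2
    simp only [blk_mul, blk_blockMat, blk_zero, bigD, Fin.sum_univ_four,
      Matrix.cons_val_zero, Matrix.cons_val_one, Matrix.head_cons, Matrix.cons_val_two,
      Matrix.tail_cons, Matrix.cons_val_three, mul_zero, zero_mul, add_zero, zero_add,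
      one_mul] at h
    exact mul_unit_eq_zero hd2 h
  -- inverse of ℓ : scalar identities
  have hlinv : ℓ * ℓ⁻¹ = 1 := Matrix.mul_nonsing_inv ℓ ((Matrix.isUnit_iff_isUnit_det ℓ).mp hℓ)
  have hone00 : ℓ 0 0 * ℓ⁻¹ 0 0 + ℓ 0 1 * ℓ⁻¹ 1 0 = 1 := by
    have h := congrFun (congrFun hlinv 0) 0
    simpa [Matrix.mul_apply, Fin.sum_univ_two, Matrix.one_apply] using h
  have hone10 : ℓ 1 0 * ℓ⁻¹ 0 0 + ℓ 1 1 * ℓ⁻¹ 1 0 = 0 := by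
    have h := congrFun (congrFun hlinv 1) 0
    simpa [Matrix.mul_apply, Fin.sum_univ_two, Matrix.one_apply] using h
  have hone01 : ℓ 0 0 * ℓ⁻¹ 0 1 + ℓ 0 1 * ℓ⁻¹ 1 1 = 0 := by
    have h := congrFun (congrFun hlinv 0) 1
    simpa [Matrix.mul_apply, Fin.sum_univ_two, Matrix.one_apply] using h
  have hone11 : ℓ 1 0 * ℓ⁻¹ 0 1 + ℓ 1 1 * ℓ⁻¹ 1 1 = 1 := by
    have h := congrFun (congrFun hlinv 1) 1
    simpa [Matrix.mul_apply, Fin.sum_univ_two, Matrix.one_apply] using h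
  -- expression of R₁, R₂ through P, Q
  have R1eq : Rmat1 C1 = P * (ℓ⁻¹ 0 0 • blockMat ![![C1, 0, 0, 0], ![0, 0, 0, 0],
      ![0, 0, C1, 0], ![0, 0, 0, 0]] + ℓ⁻¹ 1 0 • blockMat ![![0, C2, 0, 0], ![0, 0, C2, 0],
      ![0, 0, 0, 0], ![0, 0, 0, 0]]) * Qᴴ := by
    calc Rmat1 C1
        = (ℓ 0 0 * ℓ⁻¹ 0 0 + ℓ 0 1 * ℓ⁻¹ 1 0) • Rmat1 C1
          + (ℓ 1 0 * ℓ⁻¹ 0 0 + ℓ 1 1 * ℓ⁻¹ 1 0) • Rmat2 C2 := by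
          rw [hone00, hone10, one_smul, zero_smul, add_zero]
      _ = ℓ⁻¹ 0 0 • (ℓ 0 0 • Rmat1 C1 + ℓ 1 0 • Rmat2 C2)
          + ℓ⁻¹ 1 0 • (ℓ 0 1 • Rmat1 C1 + ℓ 1 1 • Rmat2 C2) := by
          simp only [smul_add, smul_smul, add_smul, mul_comm]; abel
      _ = _ := by
          rw [hY1, hY2, Matrix.mul_add, Matrix.add_mul, Matrix.mul_smul, Matrix.smul_mul,
            Matrix.mul_smul, Matrix.smul_mul]
  have R2eq : Rmat2 C2 = P * (ℓ⁻¹ 0 1 • blockMat ![![C1, 0, 0, 0], ![0, 0, 0, 0],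
      ![0, 0, C1, 0], ![0, 0, 0, 0]] + ℓ⁻¹ 1 1 • blockMat ![![0, C2, 0, 0], ![0, 0, C2, 0],
      ![0, 0, 0, 0], ![0, 0, 0, 0]]) * Qᴴ := by
    calc Rmat2 C2
        = (ℓ 0 0 * ℓ⁻¹ 0 1 + ℓ 0 1 * ℓ⁻¹ 1 1) • Rmat1 C1
          + (ℓ 1 0 * ℓ⁻¹ 0 1 + ℓ 1 1 * ℓ⁻¹ 1 1) • Rmat2 C2 := by
          rw [hone01, hone11, one_smul, zero_smul, zero_add]
      _ = ℓ⁻¹ 0 1 • (ℓ 0 0 • Rmat1 C1 + ℓ 1 0 • Rmat2 C2)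
          + ℓ⁻¹ 1 1 • (ℓ 0 1 • Rmat1 C1 + ℓ 1 1 • Rmat2 C2) := by
          simp only [smul_add, smul_smul, add_smul, mul_comm]; abel
      _ = _ := by
          rw [hY1, hY2, Matrix.mul_add, Matrix.add_mul, Matrix.mul_smul, Matrix.smul_mul,
            Matrix.mul_smul, Matrix.smul_mul]
  -- Stage 2 : q22, q12, p10, p20
  have hG1 : (ℓ⁻¹ 0 0 • blockMat ![![C1, 0, 0, 0], ![0, 0, 0, 0], ![0, 0, C1, 0],
      ![0, 0, 0, 0]] + ℓ⁻¹ 1 0 • blockMat ![![0, C2, 0, 0], ![0, 0, C2, 0], ![0, 0, 0, 0],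
      ![0, 0, 0, 0]]) * (Qᴴ * bigD (1 : Mat s) 0 1 0) = 0 := by
    apply unit_mul_eq_zero hPdet
    have h1 : P * ((ℓ⁻¹ 0 0 • blockMat ![![C1, 0, 0, 0], ![0, 0, 0, 0], ![0, 0, C1, 0],
        ![0, 0, 0, 0]] + ℓ⁻¹ 1 0 • blockMat ![![0, C2, 0, 0], ![0, 0, C2, 0], ![0, 0, 0, 0],
        ![0, 0, 0, 0]]) * (Qᴴ * bigD (1 : Mat s) 0 1 0))
        = Rmat1 C1 * bigD (1 : Mat s) 0 1 0 := by
      rw [R1eq, mul_assoc, mul_assoc]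
    rw [h1]
    apply blk_ext; intro i k
    fin_cases i <;> fin_cases k <;> simp [Rmat1, bigD, blk_mul, blk_blockMat, blk_zero, Fin.sum_univ_four, Matrix.vecHead, Matrix.vecTail]
  have hG2 : (ℓ⁻¹ 0 1 • blockMat ![![C1, 0, 0, 0], ![0, 0, 0, 0], ![0, 0, C1, 0],
      ![0, 0, 0, 0]] + ℓ⁻¹ 1 1 • blockMat ![![0, C2, 0, 0], ![0, 0, C2, 0], ![0, 0, 0, 0],
      ![0, 0, 0, 0]]) * (Qᴴ * bigD (1 : Mat s) 1 0 0) = 0 := by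
    apply unit_mul_eq_zero hPdet
    have h1 : P * ((ℓ⁻¹ 0 1 • blockMat ![![C1, 0, 0, 0], ![0, 0, 0, 0], ![0, 0, C1, 0],
        ![0, 0, 0, 0]] + ℓ⁻¹ 1 1 • blockMat ![![0, C2, 0, 0], ![0, 0, C2, 0], ![0, 0, 0, 0],
        ![0, 0, 0, 0]]) * (Qᴴ * bigD (1 : Mat s) 1 0 0))
        = Rmat2 C2 * bigD (1 : Mat s) 1 0 0 := by
      rw [R2eq, mul_assoc, mul_assoc]
    rw [h1]
    apply blk_ext; intro i k
    fin_cases i <;> fin_cases k <;> simp [Rmat2, bigD, blk_mul, blk_blockMat, blk_zero, Fin.sum_univ_four, Matrix.vecHead, Matrix.vecTail]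
  have q22 : blk Q 2 2 = 0 := by
    have h1 := congrArg (fun X => blk X 1 2) hG1
    have h2 := congrArg (fun X => blk X 2 2) hG1
    simp only [blk_mul, blk_add, blk_smul, blk_conjT, blk_blockMat, blk_zero, bigD,
      Fin.sum_univ_four, Matrix.cons_val_zero, Matrix.cons_val_one, Matrix.head_cons,
      Matrix.cons_val_two, Matrix.tail_cons, Matrix.cons_val_three, mul_zero, zero_mul,
      add_zero, zero_add, mul_one, smul_zero, smul_mul_assoc] at h1 h2
    rw [← Matrix.conjTranspose_eq_zero]
    exact pair_cancel hone00 hd1 hd2 h2 h1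
  have q12 : blk Q 1 2 = 0 := by
    have h1 := congrArg (fun X => blk X 1 1) hG2
    have h2 := congrArg (fun X => blk X 2 1) hG2
    simp only [blk_mul, blk_add, blk_smul, blk_conjT, blk_blockMat, blk_zero, bigD,
      Fin.sum_univ_four, Matrix.cons_val_zero, Matrix.cons_val_one, Matrix.head_cons,
      Matrix.cons_val_two, Matrix.tail_cons, Matrix.cons_val_three, mul_zero, zero_mul,
      add_zero, zero_add, mul_one, smul_zero, smul_mul_assoc] at h1 h2
    rw [← Matrix.conjTranspose_eq_zero]
    exact pair_cancel hone11 hd1 hd2 h2 h1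
  have hL1 : bigD (0 : Mat s) 1 0 1 * (P * (ℓ⁻¹ 0 0 • blockMat ![![C1, 0, 0, 0],
      ![0, 0, 0, 0], ![0, 0, C1, 0], ![0, 0, 0, 0]] + ℓ⁻¹ 1 0 • blockMat ![![0, C2, 0, 0],
      ![0, 0, C2, 0], ![0, 0, 0, 0], ![0, 0, 0, 0]])) = 0 := by
    apply mul_unit_eq_zero hQHdet
    have h1 : bigD (0 : Mat s) 1 0 1 * (P * (ℓ⁻¹ 0 0 • blockMat ![![C1, 0, 0, 0],
        ![0, 0, 0, 0], ![0, 0, C1, 0], ![0, 0, 0, 0]] + ℓ⁻¹ 1 0 • blockMat ![![0, C2, 0, 0],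
        ![0, 0, C2, 0], ![0, 0, 0, 0], ![0, 0, 0, 0]])) * Qᴴ
        = bigD (0 : Mat s) 1 0 1 * Rmat1 C1 := by
      rw [R1eq]; simp only [mul_assoc]
    rw [h1]
    apply blk_ext; intro i k
    fin_cases i <;> fin_cases k <;> simp [Rmat1, bigD, blk_mul, blk_blockMat, blk_zero, Fin.sum_univ_four, Matrix.vecHead, Matrix.vecTail]
  have hL2 : bigD (0 : Mat s) 0 1 1 * (P * (ℓ⁻¹ 0 1 • blockMat ![![C1, 0, 0, 0],
      ![0, 0, 0, 0], ![0, 0, C1, 0], ![0, 0, 0, 0]] + ℓ⁻¹ 1 1 • blockMat ![![0, C2, 0, 0],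
      ![0, 0, C2, 0], ![0, 0, 0, 0], ![0, 0, 0, 0]])) = 0 := by
    apply mul_unit_eq_zero hQHdet
    have h1 : bigD (0 : Mat s) 0 1 1 * (P * (ℓ⁻¹ 0 1 • blockMat ![![C1, 0, 0, 0],
        ![0, 0, 0, 0], ![0, 0, C1, 0], ![0, 0, 0, 0]] + ℓ⁻¹ 1 1 • blockMat ![![0, C2, 0, 0],
        ![0, 0, C2, 0], ![0, 0, 0, 0], ![0, 0, 0, 0]])) * Qᴴ
        = bigD (0 : Mat s) 0 1 1 * Rmat2 C2 := by
      rw [R2eq]; simp only [mul_assoc]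
    rw [h1]
    apply blk_ext; intro i k
    fin_cases i <;> fin_cases k <;> simp [Rmat2, bigD, blk_mul, blk_blockMat, blk_zero, Fin.sum_univ_four, Matrix.vecHead, Matrix.vecTail]
  have p10 : blk P 1 0 = 0 := by
    have h1 := congrArg (fun X => blk X 1 0) hL1
    have h2 := congrArg (fun X => blk X 1 1) hL1
    simp only [blk_mul, blk_add, blk_smul, blk_blockMat, blk_zero, bigD,
      Fin.sum_univ_four, Matrix.cons_val_zero, Matrix.cons_val_one, Matrix.head_cons,
      Matrix.cons_val_two, Matrix.tail_cons, Matrix.cons_val_three, mul_zero, zero_mul,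
      add_zero, zero_add, one_mul, smul_zero, mul_smul_comm] at h1 h2
    exact pair_cancel' hone00 hd1 hd2 h1 h2
  have p20 : blk P 2 0 = 0 := by
    have h1 := congrArg (fun X => blk X 2 0) hL2
    have h2 := congrArg (fun X => blk X 2 1) hL2
    simp only [blk_mul, blk_add, blk_smul, blk_blockMat, blk_zero, bigD,
      Fin.sum_univ_four, Matrix.cons_val_zero, Matrix.cons_val_one, Matrix.head_cons,
      Matrix.cons_val_two, Matrix.tail_cons, Matrix.cons_val_three, mul_zero, zero_mul,
      add_zero, zero_add, one_mul, smul_zero, mul_smul_comm] at h1 h2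
    exact pair_cancel' hone11 hd1 hd2 h1 h2
  -- unit blocks
  have hq32 : IsUnit (blk Q 3 2) := by
    apply blk_col_isUnit hQdet
    intro i hi
    fin_cases i
    · exact q02
    · exact q12
    · exact q22
    · exact absurd rfl hi
  have hp00 : IsUnit (blk P 0 0) := by
    apply blk_col_isUnit hPdet
    intro i hi
    fin_cases i
    · exact absurd rfl hi
    · exact p10
    · exact p20
    · exact p30
  have hq32d : IsUnit (blk Q 3 2).det := (Matrix.isUnit_iff_isUnit_det _).mp hq32
  have hq32Hd : IsUnit ((blk Q 3 2)ᴴ).det := by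
    rw [Matrix.det_conjTranspose]; exact hq32d.star
  have hp00d : IsUnit (blk P 0 0).det := (Matrix.isUnit_iff_isUnit_det _).mp hp00
  have hp00Hd : IsUnit ((blk P 0 0)ᴴ).det := by
    rw [Matrix.det_conjTranspose]; exact hp00d.star
  -- Gram consequences
  have hp33 : blk P 3 3 * (blk P 3 3)ᴴ = 1 := by
    have h := EP 3 3
    simp only [Fin.sum_univ_four, p30, p31, p32, Matrix.conjTranspose_zero, zero_mul,
      mul_zero, zero_add, scrL1, blk_blockMat, Matrix.cons_val_zero, Matrix.cons_val_one,
      Matrix.head_cons, Matrix.cons_val_two, Matrix.tail_cons, Matrix.cons_val_three] at h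
    exact h
  have hp33' : (blk P 3 3)ᴴ * blk P 3 3 = 1 := mul_eq_one_comm.mp hp33
  have hq03 : blk Q 0 3 * (blk Q 0 3)ᴴ = 1 := by
    have h := EQ 0 0
    simp only [Fin.sum_univ_four, q00, q01, q02, Matrix.conjTranspose_zero, zero_mul,
      mul_zero, zero_add, scrL1, blk_blockMat, Matrix.cons_val_zero, Matrix.cons_val_one,
      Matrix.head_cons, Matrix.cons_val_two, Matrix.tail_cons, Matrix.cons_val_three] at h
    exact h
  have hq03' : (blk Q 0 3)ᴴ * blk Q 0 3 = 1 := mul_eq_one_comm.mp hq03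
  have p03 : blk P 0 3 = 0 := by
    have h := EP 0 3
    simp only [Fin.sum_univ_four, p30, p31, p32, Matrix.conjTranspose_zero, zero_mul,
      mul_zero, zero_add, add_zero, scrL1, blk_blockMat, Matrix.cons_val_zero,
      Matrix.cons_val_one, Matrix.head_cons, Matrix.cons_val_two, Matrix.tail_cons,
      Matrix.cons_val_three] at h
    calc blk P 0 3 = blk P 0 3 * ((blk P 3 3)ᴴ * blk P 3 3) := by rw [hp33', mul_one]
      _ = blk P 0 3 * (blk P 3 3)ᴴ * blk P 3 3 := by rw [mul_assoc]
      _ = 0 := by rw [h, zero_mul]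
  have p13 : blk P 1 3 = b2 • (C2 * blk P 3 3) := by
    have h := EP 1 3
    simp only [Fin.sum_univ_four, p30, p31, p32, Matrix.conjTranspose_zero, zero_mul,
      mul_zero, zero_add, add_zero, scrL1, blk_blockMat, Matrix.cons_val_zero,
      Matrix.cons_val_one, Matrix.head_cons, Matrix.cons_val_two, Matrix.tail_cons,
      Matrix.cons_val_three] at h
    calc blk P 1 3 = blk P 1 3 * ((blk P 3 3)ᴴ * blk P 3 3) := by rw [hp33', mul_one]
      _ = blk P 1 3 * (blk P 3 3)ᴴ * blk P 3 3 := by rw [mul_assoc]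
      _ = (b2 • C2) * blk P 3 3 := by rw [h]
      _ = b2 • (C2 * blk P 3 3) := by rw [Matrix.smul_mul]
  have p23 : blk P 2 3 = b1 • (C1 * blk P 3 3) := by
    have h := EP 2 3
    simp only [Fin.sum_univ_four, p30, p31, p32, Matrix.conjTranspose_zero, zero_mul,
      mul_zero, zero_add, add_zero, scrL1, blk_blockMat, Matrix.cons_val_zero,
      Matrix.cons_val_one, Matrix.head_cons, Matrix.cons_val_two, Matrix.tail_cons,
      Matrix.cons_val_three] at h
    calc blk P 2 3 = blk P 2 3 * ((blk P 3 3)ᴴ * blk P 3 3) := by rw [hp33', mul_one]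
      _ = blk P 2 3 * (blk P 3 3)ᴴ * blk P 3 3 := by rw [mul_assoc]
      _ = (b1 • C1) * blk P 3 3 := by rw [h]
      _ = b1 • (C1 * blk P 3 3) := by rw [Matrix.smul_mul]
  have q33 : blk Q 3 3 = 0 := by
    have h := EQ 0 3
    simp only [Fin.sum_univ_four, q00, q01, q02, zero_mul, zero_add, scrL1, blk_blockMat,
      Matrix.cons_val_zero, Matrix.cons_val_one, Matrix.head_cons, Matrix.cons_val_two,
      Matrix.tail_cons, Matrix.cons_val_three] at h
    rw [← Matrix.conjTranspose_eq_zero]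
    calc (blk Q 3 3)ᴴ = ((blk Q 0 3)ᴴ * blk Q 0 3) * (blk Q 3 3)ᴴ := by rw [hq03', one_mul]
      _ = (blk Q 0 3)ᴴ * (blk Q 0 3 * (blk Q 3 3)ᴴ) := by rw [mul_assoc]
      _ = 0 := by rw [h, mul_zero]
  have q13 : blk Q 1 3 = (starRingEnd ℂ) b1 • (C1ᴴ * blk Q 0 3) := by
    have h := EQ 0 1
    simp only [Fin.sum_univ_four, q00, q01, q02, zero_mul, zero_add, scrL1, blk_blockMat,
      Matrix.cons_val_zero, Matrix.cons_val_one, Matrix.head_cons, Matrix.cons_val_two,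
      Matrix.tail_cons, Matrix.cons_val_three] at h
    have h2 : (blk Q 1 3)ᴴ = (blk Q 0 3)ᴴ * (b1 • C1) := by
      calc (blk Q 1 3)ᴴ = ((blk Q 0 3)ᴴ * blk Q 0 3) * (blk Q 1 3)ᴴ := by rw [hq03', one_mul]
        _ = (blk Q 0 3)ᴴ * (blk Q 0 3 * (blk Q 1 3)ᴴ) := by rw [mul_assoc]
        _ = (blk Q 0 3)ᴴ * (b1 • C1) := by rw [h]
    have h3 := congrArg Matrix.conjTranspose h2
    simpa [Matrix.conjTranspose_mul, Matrix.conjTranspose_smul, Matrix.smul_mul,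
      Complex.star_def] using h3
  have q23 : blk Q 2 3 = (starRingEnd ℂ) b2 • (C2ᴴ * blk Q 0 3) := by
    have h := EQ 0 2
    simp only [Fin.sum_univ_four, q00, q01, q02, zero_mul, zero_add, scrL1, blk_blockMat,
      Matrix.cons_val_zero, Matrix.cons_val_one, Matrix.head_cons, Matrix.cons_val_two,
      Matrix.tail_cons, Matrix.cons_val_three] at h
    have h2 : (blk Q 2 3)ᴴ = (blk Q 0 3)ᴴ * (b2 • C2) := by
      calc (blk Q 2 3)ᴴ = ((blk Q 0 3)ᴴ * blk Q 0 3) * (blk Q 2 3)ᴴ := by rw [hq03', one_mul]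
        _ = (blk Q 0 3)ᴴ * (blk Q 0 3 * (blk Q 2 3)ᴴ) := by rw [mul_assoc]
        _ = (blk Q 0 3)ᴴ * (b2 • C2) := by rw [h]
    have h3 := congrArg Matrix.conjTranspose h2
    simpa [Matrix.conjTranspose_mul, Matrix.conjTranspose_smul, Matrix.smul_mul,
      Complex.star_def] using h3
  -- remaining formulas from the bilinear equations
  have evR : ∀ i k, (ℓ 0 0 • blk (Rmat1 C1) i k + ℓ 1 0 • blk (Rmat2 C2) i k
      = blk (ℓ 0 0 • Rmat1 C1 + ℓ 1 0 • Rmat2 C2) i k) := by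
    intro i k; rw [blk_add, blk_smul, blk_smul]
  have p12 : blk P 1 2 = ℓ 1 0 • (C2 * ((blk Q 3 2)ᴴ)⁻¹ * C1⁻¹) := by
    have h := EY1 1 3
    simp only [Rmat1, Rmat2, blk_blockMat, Matrix.cons_val_zero, Matrix.cons_val_one,
      Matrix.head_cons, Matrix.cons_val_two, Matrix.tail_cons, Matrix.cons_val_three,
      smul_zero, zero_add, p10, zero_mul] at h
    rw [solve_rr hd1 hq32Hd h, Matrix.smul_mul, Matrix.smul_mul]
  have p11 : blk P 1 1 = ℓ 1 1 • (C2 * ((blk Q 3 2)ᴴ)⁻¹ * C2⁻¹) := by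
    have h := EY2 1 3
    simp only [Rmat1, Rmat2, blk_blockMat, Matrix.cons_val_zero, Matrix.cons_val_one,
      Matrix.head_cons, Matrix.cons_val_two, Matrix.tail_cons, Matrix.cons_val_three,
      smul_zero, zero_add, p10, zero_mul] at h
    rw [solve_rr hd2 hq32Hd h, Matrix.smul_mul, Matrix.smul_mul]
  have p22 : blk P 2 2 = ℓ 0 0 • (C1 * ((blk Q 3 2)ᴴ)⁻¹ * C1⁻¹) := by
    have h := EY1 2 3
    simp only [Rmat1, Rmat2, blk_blockMat, Matrix.cons_val_zero, Matrix.cons_val_one,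
      Matrix.head_cons, Matrix.cons_val_two, Matrix.tail_cons, Matrix.cons_val_three,
      smul_zero, add_zero, zero_add, p20, zero_mul] at h
    rw [solve_rr hd1 hq32Hd h, Matrix.smul_mul, Matrix.smul_mul]
  have p21 : blk P 2 1 = ℓ 0 1 • (C1 * ((blk Q 3 2)ᴴ)⁻¹ * C2⁻¹) := by
    have h := EY2 2 3
    simp only [Rmat1, Rmat2, blk_blockMat, Matrix.cons_val_zero, Matrix.cons_val_one,
      Matrix.head_cons, Matrix.cons_val_two, Matrix.tail_cons, Matrix.cons_val_three,
      smul_zero, add_zero, zero_add, p20, zero_mul] at h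
    rw [solve_rr hd2 hq32Hd h, Matrix.smul_mul, Matrix.smul_mul]
  have q10 : blk Q 1 0 = (starRingEnd ℂ) (ℓ 0 0) • (C1ᴴ * ((blk P 0 0)ᴴ)⁻¹ * (C1ᴴ)⁻¹) := by
    have h := EY1 0 1
    simp only [Rmat1, Rmat2, blk_blockMat, Matrix.cons_val_zero, Matrix.cons_val_one,
      Matrix.head_cons, Matrix.cons_val_two, Matrix.tail_cons, Matrix.cons_val_three,
      smul_zero, add_zero, q12, Matrix.conjTranspose_zero, mul_zero] at h
    have h2 := congrArg Matrix.conjTranspose h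
    simp only [Matrix.conjTranspose_mul, Matrix.conjTranspose_conjTranspose,
      Matrix.conjTranspose_smul, ← mul_assoc] at h2
    rw [solve_rr hd1H hp00Hd h2, Matrix.smul_mul, Matrix.smul_mul, Complex.star_def]
  have q20 : blk Q 2 0 = (starRingEnd ℂ) (ℓ 1 0) • (C2ᴴ * ((blk P 0 0)ᴴ)⁻¹ * (C1ᴴ)⁻¹) := by
    have h := EY1 0 2
    simp only [Rmat1, Rmat2, blk_blockMat, Matrix.cons_val_zero, Matrix.cons_val_one,
      Matrix.head_cons, Matrix.cons_val_two, Matrix.tail_cons, Matrix.cons_val_three,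
      smul_zero, zero_add, q22, Matrix.conjTranspose_zero, mul_zero, add_zero] at h
    have h2 := congrArg Matrix.conjTranspose h
    simp only [Matrix.conjTranspose_mul, Matrix.conjTranspose_conjTranspose,
      Matrix.conjTranspose_smul, ← mul_assoc] at h2
    rw [solve_rr hd1H hp00Hd h2, Matrix.smul_mul, Matrix.smul_mul, Complex.star_def]
  have q11 : blk Q 1 1 = (starRingEnd ℂ) (ℓ 0 1) • (C1ᴴ * ((blk P 0 0)ᴴ)⁻¹ * (C2ᴴ)⁻¹) := by
    have h := EY2 0 1
    simp only [Rmat1, Rmat2, blk_blockMat, Matrix.cons_val_zero, Matrix.cons_val_one,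
      Matrix.head_cons, Matrix.cons_val_two, Matrix.tail_cons, Matrix.cons_val_three,
      smul_zero, add_zero, q12, Matrix.conjTranspose_zero, mul_zero] at h
    have h2 := congrArg Matrix.conjTranspose h
    simp only [Matrix.conjTranspose_mul, Matrix.conjTranspose_conjTranspose,
      Matrix.conjTranspose_smul, ← mul_assoc] at h2
    rw [solve_rr hd2H hp00Hd h2, Matrix.smul_mul, Matrix.smul_mul, Complex.star_def]
  have q21 : blk Q 2 1 = (starRingEnd ℂ) (ℓ 1 1) • (C2ᴴ * ((blk P 0 0)ᴴ)⁻¹ * (C2ᴴ)⁻¹) := by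
    have h := EY2 0 2
    simp only [Rmat1, Rmat2, blk_blockMat, Matrix.cons_val_zero, Matrix.cons_val_one,
      Matrix.head_cons, Matrix.cons_val_two, Matrix.tail_cons, Matrix.cons_val_three,
      smul_zero, zero_add, q22, Matrix.conjTranspose_zero, mul_zero, add_zero] at h
    have h2 := congrArg Matrix.conjTranspose h
    simp only [Matrix.conjTranspose_mul, Matrix.conjTranspose_conjTranspose,
      Matrix.conjTranspose_smul, ← mul_assoc] at h2
    rw [solve_rr hd2H hp00Hd h2, Matrix.smul_mul, Matrix.smul_mul, Complex.star_def]
  refine ⟨?_, ?_, hq32, hp00, p03, p10, p20, p30, p31, p32, p11, p12, p13, p21, p22, p23,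
    q00, q01, q02, q12, q22, q33, q10, q11, q13, q20, q21, q23⟩
  · rw [Matrix.mem_unitaryGroup_iff, Matrix.star_eq_conjTranspose]
    exact hq03
  · rw [Matrix.mem_unitaryGroup_iff, Matrix.star_eq_conjTranspose]
    exact hp33
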